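/- For the Lie–Cartan vector field of F(u,v,p) = −ε₁v − 2ε₁up + vp² at the singular point (0,0,0), the eigenvalues of the projection of the linearization (onto the (u,p)-plane) are 2 and −3 when ε₁ = −1, so the singular point is a hyperbolic saddle. -/

import Mathlib

noncomputable section

open Matrix

/-- Partial derivative in the first variable. -/
def pd1 (f : ℝ → ℝ → ℝ) (u v : ℝ) : ℝ := deriv (fun t => f t v) u

/-- Partial derivative in the second variable. -/
def pd2 (f : ℝ → ℝ → ℝ) (u v : ℝ) : ℝ := deriv (fun t => f u t) v

/-- The Lie–Cartan vector field `X = (F_p, p F_p, -(F_u + p F_v))`. -/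
def lieCartan (F : ℝ → ℝ → ℝ → ℝ) (u v p : ℝ) : ℝ × ℝ × ℝ :=
  (deriv (fun t => F u v t) p,
   p * deriv (fun t => F u v t) p,
   -(deriv (fun t => F t v p) u + p * deriv (fun t => F u t p) v))

/-- The `2×2` block (in the `(u,p)` directions, along `v = 0`) of the linearization of the
Lie–Cartan vector field at the origin. -/
def lieCartanBlock (F : ℝ → ℝ → ℝ → ℝ) : Matrix (Fin 2) (Fin 2) ℝ :=
  !![pd1 (fun u p => (lieCartan F u 0 p).1) 0 0, pd2 (fun u p => (lieCartan F u 0 p).1) 0 0;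
     pd1 (fun u p => (lieCartan F u 0 p).2.2) 0 0, pd2 (fun u p => (lieCartan F u 0 p).2.2) 0 0]

/-- For the Lie–Cartan field of `F(u,v,p) = -ε₁v - 2ε₁up + vp²` with
`ε₁ = -1`, at the singular point `(0,0,0)` the eigenvalues of the projection of the
linearization onto the `(u,p)`-plane are `2` and `-3`; in particular their product is
negative, i.e. the singular point is a hyperbolic saddle. -/
theorem lieCartan_flat_affine_umbilic_saddle (e : ℝ) (he : e = -1)
    (F : ℝ → ℝ → ℝ → ℝ)
    (hF : F = fun u v p => -e * v - 2 * e * u * p + v * p ^ 2) :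
    lieCartan F 0 0 0 = 0 ∧
    Matrix.det (lieCartanBlock F - (2 : ℝ) • (1 : Matrix (Fin 2) (Fin 2) ℝ)) = 0 ∧
    Matrix.det (lieCartanBlock F - (-3 : ℝ) • (1 : Matrix (Fin 2) (Fin 2) ℝ)) = 0 ∧
    (2 : ℝ) * (-3) < 0 := by
  have d1 : ∀ u v p : ℝ, deriv (fun t : ℝ => -e*v - 2*e*u*t + v*t^2) p = -(2*e*u) + 2*v*p := by
    intro u v p
    have h := (((hasDerivAt_const p (-e*v)).sub ((hasDerivAt_id p).const_mul (2*e*u))).add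
      ((hasDerivAt_pow 2 p).const_mul v)).deriv
    simp only [id_eq] at h; refine h.trans ?_; push_cast; ring
  have d2 : ∀ u v p : ℝ, deriv (fun t : ℝ => -e*v - 2*e*t*p + v*p^2) u = -(2*e*p) := by
    intro u v p
    have h := (((hasDerivAt_const u (-e*v)).sub (((hasDerivAt_id u).const_mul (2*e)).mul_const p)).add
      (hasDerivAt_const u (v*p^2))).deriv
    simp only [id_eq] at h; refine h.trans ?_; ring
  have d3 : ∀ u v p : ℝ, deriv (fun t : ℝ => -e*t - 2*e*u*p + t*p^2) v = -e + p^2 := by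
    intro u v p
    have h := ((((hasDerivAt_id v).const_mul (-e)).sub (hasDerivAt_const v (2*e*u*p))).add
      ((hasDerivAt_id v).mul_const (p^2))).deriv
    simp only [id_eq] at h; refine h.trans ?_; ring
  subst hF
  simp only [lieCartan, lieCartanBlock, pd1, pd2, d1, d2, d3]
  norm_num
  have d4 : deriv (HMul.hMul (2*e) : ℝ → ℝ) 0 = 2*e := by
    have h := ((hasDerivAt_id (0:ℝ)).const_mul (2*e)).deriv
    simp only [id_eq] at h
    rw [show (HMul.hMul (2*e) : ℝ → ℝ) = fun t => 2*e*t from rfl, h]; ring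
  have d5 : deriv (fun t : ℝ => -(t*(-e+t^2)) + 2*e*t) 0 = 3*e := by
    have h := ((((hasDerivAt_id (0:ℝ)).mul ((hasDerivAt_const (0:ℝ) (-e)).add
      (hasDerivAt_pow 2 0))).neg).add ((hasDerivAt_id (0:ℝ)).const_mul (2*e))).deriv
    simp only [id_eq] at h
    refine h.trans ?_; simp only [Pi.add_apply]; push_cast; ring
  rw [d5, he]
  norm_num [Matrix.det_fin_two, Matrix.smul_apply, Matrix.one_apply]


end
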